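/- arXiv:2605.31237 — 7 statements merged into one kernel-verified Lean document; each statement's English description precedes it below -/
import Mathlib

section
/- For all y, z : ℤ → {0,1}, the function g_{y,z} : ℤ² → ℤ² is injective. -/
/-- Signed sum of `f` over the integer interval `[0, b)` (negated if `b < 0`). -/
noncomputable def sgnSum (f : ℤ → ℤ) (b : ℤ) : ℤ :=
  (∑ k ∈ Finset.Ico (0 : ℤ) b, f k) - (∑ k ∈ Finset.Ico b (0 : ℤ), f k)

/-- The wobbling map `g_{y,z}(a,b) = (a + Σ z over [0,b), b - Σ y over [0,a))`. -/
noncomputable def gfun (y z : ℤ → ℤ) (p : ℤ × ℤ) : ℤ × ℤ :=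
  (p.1 + sgnSum z p.2, p.2 - sgnSum y p.1)

lemma sum_Ico_cons (f : ℤ → ℤ) {m n k : ℤ} (h1 : m ≤ n) (h2 : n ≤ k) :
    ∑ i ∈ Finset.Ico m n, f i + ∑ i ∈ Finset.Ico n k, f i = ∑ i ∈ Finset.Ico m k, f i := by
  rw [← Finset.Ico_union_Ico_eq_Ico h1 h2,
    Finset.sum_union (Finset.Ico_disjoint_Ico_consecutive m n k)]

lemma sgnSum_sub (f : ℤ → ℤ) {b b' : ℤ} (h : b ≤ b') :
    sgnSum f b' - sgnSum f b = ∑ k ∈ Finset.Ico b b', f k := by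
  unfold sgnSum
  rcases le_or_gt 0 b with hb | hb
  · rw [Finset.Ico_eq_empty (by omega : ¬ (b' : ℤ) < 0),
      Finset.Ico_eq_empty (by omega : ¬ (b : ℤ) < 0)]
    have := sum_Ico_cons f hb h
    simp at *
    linarith
  · rcases le_or_gt b' 0 with hb' | hb'
    · rw [Finset.Ico_eq_empty (by omega : ¬ (0:ℤ) < b'),
        Finset.Ico_eq_empty (by omega : ¬ (0:ℤ) < b)]
      have := sum_Ico_cons f h hb'
      simp at *
      linarith
    · rw [Finset.Ico_eq_empty (by omega : ¬ (b' : ℤ) < 0),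
        Finset.Ico_eq_empty (by omega : ¬ (0:ℤ) < b)]
      have := sum_Ico_cons f hb.le hb'.le
      simp at *
      linarith

lemma sgnSum_mono (f : ℤ → ℤ) (hf : ∀ k, 0 ≤ f k) : Monotone (sgnSum f) := by
  intro b b' h
  have := sgnSum_sub f h
  have : (0:ℤ) ≤ ∑ k ∈ Finset.Ico b b', f k :=
    Finset.sum_nonneg (fun k _ => hf k)
  linarith [sgnSum_sub f h]

theorem gfun_injective (y z : ℤ → ℤ)
    (hy : ∀ k, y k = 0 ∨ y k = 1) (hz : ∀ k, z k = 0 ∨ z k = 1) :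
    Function.Injective (gfun y z) := by
  intro p q h
  obtain ⟨a, b⟩ := p
  obtain ⟨a', b'⟩ := q
  simp only [gfun, Prod.mk.injEq] at h
  obtain ⟨h1, h2⟩ := h
  have hy' : ∀ k, 0 ≤ y k := fun k => by rcases hy k with h | h <;> omega
  have hz' : ∀ k, 0 ≤ z k := fun k => by rcases hz k with h | h <;> omega
  have key : a = a' := by
    rcases lt_trichotomy a a' with hlt | heq | hgt
    · have h3 : sgnSum y a ≤ sgnSum y a' := sgnSum_mono y hy' hlt.le
      have hb : b ≤ b' := by linarith
      have h4 : sgnSum z b ≤ sgnSum z b' := sgnSum_mono z hz' hb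
      linarith
    · exact heq
    · have h3 : sgnSum y a' ≤ sgnSum y a := sgnSum_mono y hy' hgt.le
      have hb : b' ≤ b := by linarith
      have h4 : sgnSum z b' ≤ sgnSum z b := sgnSum_mono z hz' hb
      linarith
  subst key
  have : b = b' := by linarith
  simp [this]
end

section
/- For all y, z : ℤ → {0,1}, the image of g_{y,z} equals ℤ² minus the set of points of the form g_{y,z}(a,b) + (1,0) with y_a = 1 and z_b = 1. That is, g_{y,z}(ℤ²) = ℤ² \ { g_{y,z}(a,b) + (1,0) : (a,b) ∈ ℤ², y_a = z_b = 1 }. -/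
lemma sgnSum_succ (f : ℤ → ℤ) (b : ℤ) : sgnSum f (b + 1) = sgnSum f b + f b := by
  unfold sgnSum
  rcases le_or_gt 0 b with h | h
  · have e1 : Finset.Ico (0:ℤ) (b+1) = insert b (Finset.Ico 0 b) := by
      ext x; simp only [Finset.mem_Ico, Finset.mem_insert]; omega
    have e2 : Finset.Ico b (0:ℤ) = ∅ := Finset.Ico_eq_empty (by omega)
    have e3 : Finset.Ico (b+1) (0:ℤ) = ∅ := Finset.Ico_eq_empty (by omega)
    rw [e1, e2, e3, Finset.sum_insert (by simp only [Finset.mem_Ico]; omega)]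
    simp only [Finset.sum_empty]
    ring
  · have e1 : Finset.Ico b (0:ℤ) = insert b (Finset.Ico (b+1) 0) := by
      ext x; simp only [Finset.mem_Ico, Finset.mem_insert]; omega
    have e2 : Finset.Ico (0:ℤ) (b+1) = ∅ := Finset.Ico_eq_empty (by omega)
    have e3 : Finset.Ico (0:ℤ) b = ∅ := Finset.Ico_eq_empty (by omega)
    rw [e1, e2, e3, Finset.sum_insert (by simp only [Finset.mem_Ico]; omega)]
    simp only [Finset.sum_empty]
    ring

/-- Lower bound for functions increasing with steps ≥ 1. -/
lemma step_lb (ψ : ℤ → ℤ) (h : ∀ b, ψ b + 1 ≤ ψ (b + 1)) :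
    ∀ a b : ℤ, a ≤ b → ψ a + (b - a) ≤ ψ b := by
  intro a
  refine Int.le_induction ?_ ?_
  · omega
  · intro n _ ih
    have := h n
    omega

/-- Discrete intermediate value: a crossing from ≤ 0 to ≥ 1. -/
lemma cross (ψ : ℤ → ℤ) (m : ℤ) (hm : ψ m ≤ 0) :
    ∀ n : ℤ, m ≤ n → 1 ≤ ψ n → ∃ b, ψ b ≤ 0 ∧ 1 ≤ ψ (b + 1) := by
  refine Int.le_induction ?_ ?_
  · intro h; omega
  · intro n _ ih h
    rcases le_or_gt (ψ n) 0 with h' | h'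
    · exact ⟨n, h', h⟩
    · exact ih (by omega)

theorem gfun_range (y z : ℤ → ℤ)
    (hy : ∀ k, y k = 0 ∨ y k = 1) (hz : ∀ k, z k = 0 ∨ z k = 1) :
    Set.range (gfun y z)
      = Set.univ \
        {v : ℤ × ℤ | ∃ a b : ℤ, y a = 1 ∧ z b = 1 ∧ v = gfun y z (a, b) + (1, 0)} := by
  ext ⟨u, v⟩
  simp only [Set.mem_range, Set.mem_diff, Set.mem_univ, Set.mem_setOf_eq, true_and]
  set ψ : ℤ → ℤ := fun b => b - v - sgnSum y (u - sgnSum z b) with hψ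
  -- step property
  have hstep : ∀ b, ψ (b + 1) = ψ b + 1 ∨
      (ψ (b + 1) = ψ b + 2 ∧ z b = 1 ∧ y (u - sgnSum z b - 1) = 1) := by
    intro b
    have hzb := sgnSum_succ z b
    rcases hz b with h0 | h1
    · left
      simp only [hψ]
      rw [hzb, h0, add_zero]
      omega
    · have hys := sgnSum_succ y (u - sgnSum z b - 1)
      rw [show u - sgnSum z b - 1 + 1 = u - sgnSum z b by ring] at hys
      rcases hy (u - sgnSum z b - 1) with hy0 | hy1
      · left
        simp only [hψ]
        rw [hzb, h1, show u - (sgnSum z b + 1) = u - sgnSum z b - 1 by ring]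
        omega
      · right
        refine ⟨?_, h1, hy1⟩
        simp only [hψ]
        rw [hzb, h1, show u - (sgnSum z b + 1) = u - sgnSum z b - 1 by ring]
        omega
  have hstep1 : ∀ b, ψ b + 1 ≤ ψ (b + 1) := by
    intro b; rcases hstep b with h | ⟨h, _⟩ <;> omega
  -- range ↔ ∃ b, ψ b = 0
  have hrange : (∃ p : ℤ × ℤ, gfun y z p = (u, v)) ↔ ∃ b, ψ b = 0 := by
    constructor
    · rintro ⟨⟨a, b⟩, hp⟩
      simp only [gfun, Prod.mk.injEq] at hp
      obtain ⟨h1, h2⟩ := hp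
      refine ⟨b, ?_⟩
      simp only [hψ]
      rw [show u - sgnSum z b = a by omega]
      omega
    · rintro ⟨b, hb⟩
      simp only [hψ] at hb
      refine ⟨(u - sgnSum z b, b), ?_⟩
      simp only [gfun, Prod.mk.injEq]
      constructor
      · ring
      · omega
  -- forbidden ↔ ∃ b, ψ b = -1 ∧ ψ (b+1) = 1
  have hforb : (∃ a b : ℤ, y a = 1 ∧ z b = 1 ∧
      (u, v) = gfun y z (a, b) + (1, 0)) ↔ ∃ b, ψ b = -1 ∧ ψ (b + 1) = 1 := by
    constructor
    · rintro ⟨a, b, hya, hzb, heq⟩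
      simp only [gfun, Prod.mk_add_mk, Prod.mk.injEq, add_zero] at heq
      obtain ⟨h1, h2⟩ := heq
      have hys := sgnSum_succ y a
      have hzs := sgnSum_succ z b
      refine ⟨b, ?_, ?_⟩
      · simp only [hψ]
        rw [show u - sgnSum z b = a + 1 by omega, hys]
        omega
      · simp only [hψ]
        rw [hzs, hzb, show u - (sgnSum z b + 1) = a by omega]
        omega
    · rintro ⟨b, hb1, hb2⟩
      rcases hstep b with h | ⟨_, hzb, hya⟩
      · omega
      refine ⟨u - sgnSum z b - 1, b, hya, hzb, ?_⟩
      have hzs := sgnSum_succ z b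
      simp only [hψ] at hb2
      rw [hzs, hzb, show u - (sgnSum z b + 1) = u - sgnSum z b - 1 by ring] at hb2
      simp only [gfun, Prod.mk_add_mk, Prod.mk.injEq, add_zero]
      constructor
      · omega
      · omega
  rw [hrange, hforb]
  constructor
  · rintro ⟨b0, hb0⟩ ⟨b, hb1, hb2⟩
    rcases le_or_gt b0 b with h | h
    · have := step_lb ψ hstep1 b0 b h; omega
    · have := step_lb ψ hstep1 (b + 1) b0 (by omega); omega
  · intro hno
    have habs1 := abs_nonneg (ψ 0)
    have habs2 := le_abs_self (ψ 0)
    have habs3 := neg_abs_le (ψ 0)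
    have hm : ψ (-|ψ 0| - 1) ≤ 0 := by
      have := step_lb ψ hstep1 (-|ψ 0| - 1) 0 (by omega)
      omega
    have hn : 1 ≤ ψ (|ψ 0| + 1) := by
      have := step_lb ψ hstep1 0 (|ψ 0| + 1) (by omega)
      omega
    obtain ⟨b, hb1, hb2⟩ := cross ψ (-|ψ 0| - 1) hm (|ψ 0| + 1) (by omega) hn
    rcases hstep b with h | ⟨h, _, _⟩
    · exact ⟨b, by omega⟩
    · rcases eq_or_ne (ψ b) 0 with h0 | h0
      · exact ⟨b, h0⟩
      · exact absurd ⟨b, by omega, by omega⟩ hno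
end

section
/- For every point v ∈ ℤ² not in the image of g_{y,z}, all four nearest neighbors v + (1,0), v + (-1,0), v + (0,1), v + (0,-1) lie in the image of g_{y,z}. -/
lemma Ico_succ_singleton' (b : ℤ) : Finset.Ico b (b + 1) = {b} := by
  ext x
  simp [Finset.mem_Ico]
  omega

/-- Key combinatorial lemma: a function `ℤ → ℤ` whose steps are 1 or 2 hits both
neighbors of any skipped value. -/
lemma skip_lemma (ψ : ℤ → ℤ)
    (hstep : ∀ b, ψ (b + 1) = ψ b + 1 ∨ ψ (b + 1) = ψ b + 2)
    (q : ℤ) (hq : q ∉ Set.range ψ) :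
    (q - 1) ∈ Set.range ψ ∧ (q + 1) ∈ Set.range ψ := by
  have hmono : ∀ (b : ℤ) (n : ℕ), ψ b + n ≤ ψ (b + n) := by
    intro b n
    induction n with
    | zero => simp
    | succ n ih =>
      have h := hstep (b + n)
      have e : b + ((n : ℤ) + 1) = (b + n) + 1 := by ring
      push_cast
      rw [e]
      omega
  set m : ℕ := (ψ 0 - q + 1).toNat with hm
  set b0 : ℤ := -(m : ℤ) with hb0
  have hmge : (m : ℤ) ≥ ψ 0 - q + 1 := Int.self_le_toNat _
  have hb0lt : ψ b0 < q := by
    have := hmono b0 m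
    rw [show b0 + (m : ℤ) = 0 by omega] at this
    omega
  have hne : ∃ n : ℕ, q ≤ ψ (b0 + n) := by
    refine ⟨(q - ψ b0).toNat, ?_⟩
    have h1 := hmono b0 (q - ψ b0).toNat
    have h2 : ((q - ψ b0).toNat : ℤ) ≥ q - ψ b0 := Int.self_le_toNat _
    omega
  set N := Nat.find hne with hN
  have hNspec : q ≤ ψ (b0 + N) := Nat.find_spec hne
  have hNpos : N ≠ 0 := by
    intro h0
    rw [h0] at hNspec
    simp at hNspec
    omega
  have hNprev : ¬ q ≤ ψ (b0 + (N - 1 : ℕ)) := Nat.find_min hne (by omega)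
  set c : ℤ := b0 + (N - 1 : ℕ) with hc
  have hcast : b0 + (N : ℤ) = c + 1 := by
    rw [hc]
    have : ((N - 1 : ℕ) : ℤ) = (N : ℤ) - 1 := by
      have : 1 ≤ N := Nat.one_le_iff_ne_zero.mpr hNpos
      omega
    omega
  rw [hcast] at hNspec
  have hclt : ψ c < q := by omega
  have hstepc := hstep c
  have hne1 : ψ (c + 1) ≠ q := fun h => hq ⟨c + 1, h⟩
  have hcq : ψ c = q - 1 := by omega
  have hcq1 : ψ (c + 1) = q + 1 := by omega
  exact ⟨⟨c, hcq⟩, ⟨c + 1, hcq1⟩⟩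

theorem gfun_neighbors_of_not_mem (y z : ℤ → ℤ)
    (hy : ∀ k, y k = 0 ∨ y k = 1) (hz : ∀ k, z k = 0 ∨ z k = 1)
    (v : ℤ × ℤ) (hv : v ∉ Set.range (gfun y z)) :
    v + (1, 0) ∈ Set.range (gfun y z) ∧
    v + (-1, 0) ∈ Set.range (gfun y z) ∧
    v + (0, 1) ∈ Set.range (gfun y z) ∧
    v + (0, -1) ∈ Set.range (gfun y z) := by
  obtain ⟨p, q⟩ := v
  -- vertical function
  set ψ : ℤ → ℤ := fun b => b - sgnSum y (p - sgnSum z b) with hψ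
  have hψstep : ∀ b, ψ (b + 1) = ψ b + 1 ∨ ψ (b + 1) = ψ b + 2 := by
    intro b
    simp only [hψ]
    rw [sgnSum_succ z b]
    rcases hz b with h | h
    · rw [h]; left; ring_nf
    · rw [h]
      have e : p - (sgnSum z b + 1) = (p - sgnSum z b - 1) := by ring
      have e2 : sgnSum y (p - sgnSum z b) = sgnSum y (p - sgnSum z b - 1) + y (p - sgnSum z b - 1) := by
        have := sgnSum_succ y (p - sgnSum z b - 1)
        rw [show p - sgnSum z b - 1 + 1 = p - sgnSum z b by ring] at this
        exact this
      rw [e]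
      rcases hy (p - sgnSum z b - 1) with h' | h' <;> [left; right] <;> omega
  have hψhit : ∀ t, t ∈ Set.range ψ → ((p, t) : ℤ × ℤ) ∈ Set.range (gfun y z) := by
    rintro t ⟨b, rfl⟩
    exact ⟨(p - sgnSum z b, b), by simp [gfun, hψ]⟩
  have hψq : q ∉ Set.range ψ := by
    rintro ⟨b, rfl⟩
    exact hv (hψhit _ ⟨b, rfl⟩)
  obtain ⟨hv1, hv2⟩ := skip_lemma ψ hψstep q hψq
  -- horizontal function
  set χ : ℤ → ℤ := fun a => a + sgnSum z (q + sgnSum y a) with hχ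
  have hχstep : ∀ a, χ (a + 1) = χ a + 1 ∨ χ (a + 1) = χ a + 2 := by
    intro a
    simp only [hχ]
    rw [sgnSum_succ y a]
    rcases hy a with h | h
    · rw [h]; left; ring_nf
    · rw [h]
      have e2 : sgnSum z (q + (sgnSum y a + 1)) = sgnSum z (q + sgnSum y a) + z (q + sgnSum y a) := by
        have := sgnSum_succ z (q + sgnSum y a)
        rw [show q + sgnSum y a + 1 = q + (sgnSum y a + 1) by ring] at this
        exact this
      rw [e2]
      rcases hz (q + sgnSum y a) with h' | h' <;> [left; right] <;> omega
  have hχhit : ∀ s, s ∈ Set.range χ → ((s, q) : ℤ × ℤ) ∈ Set.range (gfun y z) := by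
    rintro s ⟨a, rfl⟩
    exact ⟨(a, q + sgnSum y a), by simp [gfun, hχ]⟩
  have hχp : p ∉ Set.range χ := by
    rintro ⟨a, rfl⟩
    exact hv (hχhit _ ⟨a, rfl⟩)
  obtain ⟨hh1, hh2⟩ := skip_lemma χ hχstep p hχp
  refine ⟨?_, ?_, ?_, ?_⟩
  · have := hχhit _ hh2
    simpa [Prod.ext_iff] using this
  · have := hχhit _ hh1
    simpa [Prod.ext_iff, sub_eq_add_neg] using this
  · have := hψhit _ hv2
    simpa [Prod.ext_iff] using this
  · have := hψhit _ hv1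
    simpa [Prod.ext_iff, sub_eq_add_neg] using this
end

section
/- Let A be a finite alphabet, r ≥ 2, and τ : A → A^(r×r) a primitive substitution (i.e., there exists n ≥ 1 such that for all a, b ∈ A, the symbol b occurs in τⁿ(a)). Then the substitutive subshift X_τ is linearly recurrent: there exists a constant c ≥ 1 such that every globally valid ℓ×ℓ pattern of X_τ occurs in every globally valid (c·ℓ)×(c·ℓ) pattern of X_τ, for all ℓ ≥ 1. -/
section

variable {A : Type*}

/-- The `n`-th iterate of the `r × r` substitution `τ` applied to a letter,
viewed as a function on `ℤ²` whose meaningful domain is `[0, rⁿ)²`. -/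
def subIter (r : ℕ) (τ : A → ℤ × ℤ → A) : ℕ → A → ℤ × ℤ → A
  | 0, a, _ => a
  | n + 1, a, p =>
      τ (subIter r τ n a (p.1 / (r : ℤ), p.2 / (r : ℤ)))
        (p.1 % (r : ℤ), p.2 % (r : ℤ))

/-- The `ℓ × ℓ` pattern `p` occurs in the `m × m` pattern `q`
(both anchored at the origin). -/
def occursIn (p : ℤ × ℤ → A) (ℓ : ℕ) (q : ℤ × ℤ → A) (m : ℕ) : Prop :=
  ∃ v : ℤ × ℤ, 0 ≤ v.1 ∧ v.1 + ℓ ≤ m ∧ 0 ≤ v.2 ∧ v.2 + ℓ ≤ m ∧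
    ∀ u : ℤ × ℤ, 0 ≤ u.1 → u.1 < ℓ → 0 ≤ u.2 → u.2 < ℓ →
      q (u.1 + v.1, u.2 + v.2) = p u

/-- The substitutive subshift of `τ`: configurations all of whose square
subpatterns occur in some `τⁿ(a)`. -/
def substSubshift (r : ℕ) (τ : A → ℤ × ℤ → A) : Set (ℤ × ℤ → A) :=
  {x | ∀ ℓ : ℕ, ∀ v : ℤ × ℤ, ∃ n : ℕ, ∃ a : A,
    occursIn (fun u => x (u + v)) ℓ (subIter r τ n a) (r ^ n)}

/-- `p` is a globally valid `ℓ × ℓ` pattern of `X`. -/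
def globallyValid (X : Set (ℤ × ℤ → A)) (p : ℤ × ℤ → A) (ℓ : ℕ) : Prop :=
  ∃ x ∈ X, ∀ u : ℤ × ℤ, 0 ≤ u.1 → u.1 < ℓ → 0 ≤ u.2 → u.2 < ℓ → x u = p u

end

namespace LRaux

lemma my_ediv_ediv (a : ℤ) {b c : ℤ} (hb : 0 < b) (hc : 0 < c) :
    a / b / c = a / (b * c) := by
  have h1 : a % b + b * ((a / b) % c) + b * c * (a / b / c) = a := by
    have e1 : b * (a / b) + a % b = a := Int.mul_ediv_add_emod a b
    have e2 : c * (a / b / c) + (a / b) % c = a / b := Int.mul_ediv_add_emod (a / b) c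
    nlinarith [e1, e2]
  have hr1 : 0 ≤ a % b := Int.emod_nonneg a hb.ne'
  have hr2 : a % b < b := Int.emod_lt_of_pos a hb
  have hr3 : 0 ≤ (a / b) % c := Int.emod_nonneg _ hc.ne'
  have hr4 : (a / b) % c < c := Int.emod_lt_of_pos _ hc
  have hrem : 0 ≤ a % b + b * ((a / b) % c) ∧ a % b + b * ((a / b) % c) < b * c := by
    constructor
    · positivity
    · nlinarith
  conv_rhs => rw [← h1]
  rw [Int.add_mul_ediv_left _ _ (by positivity : b * c ≠ 0)]
  rw [Int.ediv_eq_zero_of_lt hrem.1 hrem.2, zero_add]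

lemma mod_div_eq (p : ℤ) {b c : ℤ} (hb : 0 < b) (hc : 0 < c) :
    (p / b) % c = (p % (b * c)) / b := by
  have h1 : p % (b * c) = p + b * (-(c * (p / (b * c)))) := by
    rw [Int.emod_def]; ring
  rw [h1, Int.add_mul_ediv_left _ _ hb.ne', Int.emod_def, my_ediv_ediv p hb hc]
  ring

variable {A : Type*}

lemma subIter_add {r : ℕ} (hr : 0 < r) (τ : A → ℤ × ℤ → A) (m k : ℕ) (a : A) (p : ℤ × ℤ) :
    subIter r τ (m + k) a p =
      subIter r τ k (subIter r τ m a (p.1 / (r : ℤ) ^ k, p.2 / (r : ℤ) ^ k))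
        (p.1 % (r : ℤ) ^ k, p.2 % (r : ℤ) ^ k) := by
  have hrz : (0 : ℤ) < (r : ℤ) := by exact_mod_cast hr
  induction k generalizing p with
  | zero => simp [subIter]
  | succ k ih =>
    have hrk : (0 : ℤ) < (r : ℤ) ^ k := by positivity
    have hpow : (r : ℤ) ^ (k + 1) = (r : ℤ) * (r : ℤ) ^ k := by rw [pow_succ]; ring
    show τ (subIter r τ (m + k) a (p.1 / r, p.2 / r)) (p.1 % r, p.2 % r) = _
    rw [ih (p.1 / r, p.2 / r)]
    show _ = τ (subIter r τ k
        (subIter r τ m a ((p.1 / (r : ℤ) ^ (k+1)), p.2 / (r : ℤ) ^ (k+1)))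
        ((p.1 % (r : ℤ) ^ (k+1)) / r, (p.2 % (r : ℤ) ^ (k+1)) / r))
        ((p.1 % (r : ℤ) ^ (k+1)) % r, (p.2 % (r : ℤ) ^ (k+1)) % r)
    have E1 : ∀ x : ℤ, x / r / (r:ℤ)^k = x / (r:ℤ)^(k+1) := fun x => by
      rw [my_ediv_ediv x hrz hrk, hpow]
    have E2 : ∀ x : ℤ, (x / r) % (r:ℤ)^k = (x % (r:ℤ)^(k+1)) / r := fun x => by
      rw [mod_div_eq x hrz hrk, hpow]
    have E3 : ∀ x : ℤ, (x % (r:ℤ)^(k+1)) % r = x % r := fun x =>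
      Int.emod_emod_of_dvd x (by rw [hpow]; exact Dvd.intro _ rfl)
    simp only [E1, E2, E3]

end LRaux

namespace LRaux
variable {A : Type*}

lemma occursIn_congr {p p' q : ℤ × ℤ → A} {ℓ m : ℕ}
    (h : ∀ u : ℤ × ℤ, 0 ≤ u.1 → u.1 < ℓ → 0 ≤ u.2 → u.2 < ℓ → p u = p' u) :
    occursIn p ℓ q m → occursIn p' ℓ q m := by
  rintro ⟨v, h1, h2, h3, h4, h5⟩
  exact ⟨v, h1, h2, h3, h4, fun u a b c d => (h5 u a b c d).trans (h u a b c d)⟩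

lemma occursIn_trans {p q s : ℤ × ℤ → A} {ℓ m t : ℕ} :
    occursIn p ℓ q m → occursIn q m s t → occursIn p ℓ s t := by
  rintro ⟨v, h1, h2, h3, h4, h5⟩ ⟨w, g1, g2, g3, g4, g5⟩
  refine ⟨(v.1 + w.1, v.2 + w.2), by omega, by omega, by omega, by omega, ?_⟩
  intro u hu1 hu2 hu3 hu4
  have e : (u.1 + (v.1 + w.1), u.2 + (v.2 + w.2))
      = ((u.1 + v.1) + w.1, (u.2 + v.2) + w.2) := by
    rw [Prod.mk.injEq]; constructor <;> ring
  rw [e, g5 (u.1 + v.1, u.2 + v.2) (by omega) (by omega) (by omega) (by omega)]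
  exact h5 u hu1 hu2 hu3 hu4

lemma block_value {r : ℕ} (hr : 0 < r) (τ : A → ℤ × ℤ → A) (m k : ℕ) (a : A)
    (i u : ℤ × ℤ) (h1 : 0 ≤ u.1) (h2 : u.1 < (r : ℤ) ^ k)
    (h3 : 0 ≤ u.2) (h4 : u.2 < (r : ℤ) ^ k) :
    subIter r τ (m + k) a (u.1 + i.1 * (r : ℤ) ^ k, u.2 + i.2 * (r : ℤ) ^ k)
      = subIter r τ k (subIter r τ m a i) u := by
  have hrk : (0 : ℤ) < (r : ℤ) ^ k := by positivity
  rw [subIter_add hr τ m k]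
  simp only
  rw [Int.add_mul_ediv_right _ _ hrk.ne', Int.add_mul_ediv_right _ _ hrk.ne',
    Int.ediv_eq_zero_of_lt h1 h2, Int.ediv_eq_zero_of_lt h3 h4,
    Int.add_mul_emod_self_right, Int.add_mul_emod_self_right,
    Int.emod_eq_of_lt h1 h2, Int.emod_eq_of_lt h3 h4]
  simp

lemma block_occurs {r : ℕ} (hr : 0 < r) (τ : A → ℤ × ℤ → A) (m k : ℕ) (a : A)
    (i : ℤ × ℤ) (h1 : 0 ≤ i.1) (h2 : i.1 + 1 ≤ (r : ℤ) ^ m)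
    (h3 : 0 ≤ i.2) (h4 : i.2 + 1 ≤ (r : ℤ) ^ m) :
    occursIn (subIter r τ k (subIter r τ m a i)) (r ^ k)
      (subIter r τ (m + k) a) (r ^ (m + k)) := by
  have hrk : (0 : ℤ) < (r : ℤ) ^ k := by positivity
  have hcast : ∀ j : ℕ, ((r ^ j : ℕ) : ℤ) = (r : ℤ) ^ j := fun j => by push_cast; ring
  refine ⟨(i.1 * (r : ℤ) ^ k, i.2 * (r : ℤ) ^ k), by positivity, ?_, by positivity, ?_, ?_⟩
  · simp only; rw [hcast, hcast, pow_add]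
    nlinarith [mul_le_mul_of_nonneg_right h2 hrk.le]
  · simp only; rw [hcast, hcast, pow_add]
    nlinarith [mul_le_mul_of_nonneg_right h4 hrk.le]
  · intro u hu1 hu2 hu3 hu4
    rw [hcast] at hu2 hu4
    exact block_value hr τ m k a i u hu1 hu2 hu3 hu4

lemma occurs_pad {r : ℕ} (hr : 0 < r) (τ : A → ℤ × ℤ → A) {p : ℤ × ℤ → A} {ℓ n : ℕ}
    {a : A} (n0 : ℕ)
    (hprim : ∀ a b : A, ∃ u : ℤ × ℤ, 0 ≤ u.1 ∧ u.1 < (r : ℤ) ^ n0 ∧ 0 ≤ u.2 ∧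
      u.2 < (r : ℤ) ^ n0 ∧ subIter r τ n0 a u = b)
    (h : occursIn p ℓ (subIter r τ n a) (r ^ n)) (b : A) :
    occursIn p ℓ (subIter r τ (n0 + n) b) (r ^ (n0 + n)) := by
  obtain ⟨u, u1, u2, u3, u4, u5⟩ := hprim b a
  have hb := block_occurs hr τ n0 n b u u1 (by omega) u3 (by omega)
  rw [u5] at hb
  exact occursIn_trans h hb

lemma occurs_level {r : ℕ} (hr : 0 < r) (τ : A → ℤ × ℤ → A) {p : ℤ × ℤ → A} {ℓ j : ℕ}
    (h : ∀ c : A, occursIn p ℓ (subIter r τ j c) (r ^ j)) :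
    ∀ t : ℕ, ∀ b : A, occursIn p ℓ (subIter r τ (t + j) b) (r ^ (t + j)) := by
  intro t
  induction t with
  | zero => simpa using h
  | succ t ih =>
    intro b
    have hrz : (1 : ℤ) ≤ (r : ℤ) := by exact_mod_cast hr
    have hb := block_occurs hr τ 1 (t + j) b (0, 0) (by simp) (by simpa using hrz)
      (by simp) (by simpa using hrz)
    have h2 := occursIn_trans (ih (subIter r τ 1 b (0, 0))) hb
    have e : 1 + (t + j) = (t + 1) + j := by omega
    rw [e] at h2
    exact h2

end LRaux

namespace LRaux
variable {A : Type*}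

lemma extract {r : ℕ} (hr : 2 ≤ r) (τ : A → ℤ × ℤ → A) {p : ℤ × ℤ → A}
    {ℓ k n : ℕ} {a : A}
    (hk : (ℓ : ℤ) ≤ (r : ℤ) ^ k) (hn : k + 1 ≤ n)
    (h : occursIn p ℓ (subIter r τ n a) (r ^ n)) :
    ∃ i₀ d : ℤ × ℤ,
      0 ≤ i₀.1 ∧ i₀.1 + 2 ≤ (r : ℤ) ^ (n - k) ∧
      0 ≤ i₀.2 ∧ i₀.2 + 2 ≤ (r : ℤ) ^ (n - k) ∧
      0 ≤ d.1 ∧ d.1 + ℓ ≤ 2 * (r : ℤ) ^ k ∧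
      0 ≤ d.2 ∧ d.2 + ℓ ≤ 2 * (r : ℤ) ^ k ∧
      ∀ u : ℤ × ℤ, 0 ≤ u.1 → u.1 < ℓ → 0 ≤ u.2 → u.2 < ℓ →
        p u = subIter r τ k
          (subIter r τ (n - k) a
            ((u.1 + d.1) / (r : ℤ) ^ k + i₀.1, (u.2 + d.2) / (r : ℤ) ^ k + i₀.2))
          ((u.1 + d.1) % (r : ℤ) ^ k, (u.2 + d.2) % (r : ℤ) ^ k) := by
  obtain ⟨v, v1, v2, v3, v4, hv⟩ := h
  have hr0 : 0 < r := by omega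
  have hrz : (2 : ℤ) ≤ (r : ℤ) := by exact_mod_cast hr
  have hR : (0 : ℤ) < (r : ℤ) ^ k := by positivity
  have hM2 : (2 : ℤ) ≤ (r : ℤ) ^ (n - k) := by
    calc (2 : ℤ) ≤ (r : ℤ) := hrz
    _ = (r : ℤ) ^ 1 := (pow_one _).symm
    _ ≤ (r : ℤ) ^ (n - k) := pow_le_pow_right₀ (by omega) (by omega)
  have hRM : (r : ℤ) ^ k * (r : ℤ) ^ (n - k) = (r : ℤ) ^ n := by
    rw [← pow_add]; congr 1; omega
  have hcast : ((r ^ n : ℕ) : ℤ) = (r : ℤ) ^ n := by push_cast; ring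
  rw [hcast] at v2 v4
  set R : ℤ := (r : ℤ) ^ k with hRdef
  set M : ℤ := (r : ℤ) ^ (n - k) with hMdef
  set i1 : ℤ := min (v.1 / R) (M - 2) with hi1
  set i2 : ℤ := min (v.2 / R) (M - 2) with hi2
  have hdiv1 : 0 ≤ v.1 / R := Int.ediv_nonneg v1 hR.le
  have hdiv2 : 0 ≤ v.2 / R := Int.ediv_nonneg v3 hR.le
  have hmul1 : i1 * R ≤ v.1 :=
    le_trans (mul_le_mul_of_nonneg_right (min_le_left _ _) hR.le) (Int.ediv_mul_le _ hR.ne')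
  have hmul2 : i2 * R ≤ v.2 :=
    le_trans (mul_le_mul_of_nonneg_right (min_le_left _ _) hR.le) (Int.ediv_mul_le _ hR.ne')
  have hd1 : (v.1 - i1 * R) + ℓ ≤ 2 * R := by
    rcases le_or_gt (v.1 / R) (M - 2) with hc | hc
    · have e : i1 = v.1 / R := min_eq_left hc
      have e2 : v.1 % R = v.1 - R * (v.1 / R) := Int.emod_def v.1 R
      have e3 : v.1 % R < R := Int.emod_lt_of_pos v.1 hR
      rw [e]; nlinarith
    · have e : i1 = M - 2 := min_eq_right hc.le
      rw [e]; nlinarith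
  have hd2 : (v.2 - i2 * R) + ℓ ≤ 2 * R := by
    rcases le_or_gt (v.2 / R) (M - 2) with hc | hc
    · have e : i2 = v.2 / R := min_eq_left hc
      have e2 : v.2 % R = v.2 - R * (v.2 / R) := Int.emod_def v.2 R
      have e3 : v.2 % R < R := Int.emod_lt_of_pos v.2 hR
      rw [e]; nlinarith
    · have e : i2 = M - 2 := min_eq_right hc.le
      rw [e]; nlinarith
  refine ⟨(i1, i2), (v.1 - i1 * R, v.2 - i2 * R),
    le_min hdiv1 (by omega), by simp only; omega,
    le_min hdiv2 (by omega), by simp only; omega,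
    by simp only; omega, hd1, by simp only; omega, hd2, ?_⟩
  intro u hu1 hu2 hu3 hu4
  have key := subIter_add hr0 τ (n - k) k a (u.1 + v.1, u.2 + v.2)
  rw [show n - k + k = n from by omega] at key
  have hval := hv u hu1 hu2 hu3 hu4
  rw [key] at hval
  rw [← hval]
  simp only
  have E : ∀ (x y j : ℤ), x + y = (x + (y - j * R)) + j * R := fun x y j => by ring
  rw [E u.1 v.1 i1, E u.2 v.2 i2,
    Int.add_mul_ediv_right _ _ hR.ne', Int.add_mul_ediv_right _ _ hR.ne',
    Int.add_mul_emod_self_right, Int.add_mul_emod_self_right]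

lemma embed {r : ℕ} (hr : 2 ≤ r) (τ : A → ℤ × ℤ → A) {p ρ : ℤ × ℤ → A}
    {ℓ k N : ℕ} {b : A} {d : ℤ × ℤ}
    (hℓ : (ℓ : ℤ) ≤ (r : ℤ) ^ k)
    (hd1 : 0 ≤ d.1) (hd2 : d.1 + ℓ ≤ 2 * (r : ℤ) ^ k)
    (hd3 : 0 ≤ d.2) (hd4 : d.2 + ℓ ≤ 2 * (r : ℤ) ^ k)
    (hp : ∀ u : ℤ × ℤ, 0 ≤ u.1 → u.1 < ℓ → 0 ≤ u.2 → u.2 < ℓ →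
      p u = subIter r τ k (ρ ((u.1 + d.1) / (r : ℤ) ^ k, (u.2 + d.2) / (r : ℤ) ^ k))
        ((u.1 + d.1) % (r : ℤ) ^ k, (u.2 + d.2) % (r : ℤ) ^ k))
    (hρ : occursIn ρ 2 (subIter r τ N b) (r ^ N)) :
    occursIn p ℓ (subIter r τ (N + k) b) (r ^ (N + k)) := by
  obtain ⟨w, w1, w2, w3, w4, hw⟩ := hρ
  have hr0 : 0 < r := by omega
  have hR : (0 : ℤ) < (r : ℤ) ^ k := by positivity
  have hcN : ((r ^ N : ℕ) : ℤ) = (r : ℤ) ^ N := by push_cast; ring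
  have hcNk : ((r ^ (N + k) : ℕ) : ℤ) = (r : ℤ) ^ N * (r : ℤ) ^ k := by
    push_cast; rw [pow_add]
  rw [hcN] at w2 w4
  have hw2 : w.1 + 2 ≤ (r : ℤ) ^ N := by exact_mod_cast w2
  have hw4 : w.2 + 2 ≤ (r : ℤ) ^ N := by exact_mod_cast w4
  refine ⟨(d.1 + w.1 * (r : ℤ) ^ k, d.2 + w.2 * (r : ℤ) ^ k),
    by simp only; positivity, ?_, by simp only; positivity, ?_, ?_⟩
  · simp only; rw [hcNk]; nlinarith
  · simp only; rw [hcNk]; nlinarith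
  · intro u hu1 hu2 hu3 hu4
    simp only
    have key := subIter_add hr0 τ N k b
      (u.1 + (d.1 + w.1 * (r : ℤ) ^ k), u.2 + (d.2 + w.2 * (r : ℤ) ^ k))
    rw [key]
    simp only
    have E : ∀ (x y j : ℤ), x + (y + j * (r : ℤ) ^ k) = (x + y) + j * (r : ℤ) ^ k :=
      fun x y j => by ring
    rw [E u.1 d.1 w.1, E u.2 d.2 w.2,
      Int.add_mul_ediv_right _ _ hR.ne', Int.add_mul_ediv_right _ _ hR.ne',
      Int.add_mul_emod_self_right, Int.add_mul_emod_self_right]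
    have hq1 : 0 ≤ (u.1 + d.1) / (r : ℤ) ^ k := Int.ediv_nonneg (by omega) hR.le
    have hq2 : (u.1 + d.1) / (r : ℤ) ^ k < 2 := by
      rw [Int.ediv_lt_iff_lt_mul hR]; omega
    have hq3 : 0 ≤ (u.2 + d.2) / (r : ℤ) ^ k := Int.ediv_nonneg (by omega) hR.le
    have hq4 : (u.2 + d.2) / (r : ℤ) ^ k < 2 := by
      rw [Int.ediv_lt_iff_lt_mul hR]; omega
    have hwval := hw ((u.1 + d.1) / (r : ℤ) ^ k, (u.2 + d.2) / (r : ℤ) ^ k)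
      hq1 (by exact_mod_cast hq2) hq3 (by exact_mod_cast hq4)
    simp only at hwval
    rw [hwval]
    exact (hp u hu1 hu2 hu3 hu4).symm

end LRaux

namespace LRaux
variable {A : Type*}

noncomputable def ext2 (g : Fin 2 × Fin 2 → A) : ℤ × ℤ → A := fun u =>
  if h : 0 ≤ u.1 ∧ u.1 < 2 ∧ 0 ≤ u.2 ∧ u.2 < 2 then
    g (⟨u.1.toNat, by omega⟩, ⟨u.2.toNat, by omega⟩)
  else g (0, 0)

lemma ext2_restrict (ρ : ℤ × ℤ → A) (u : ℤ × ℤ)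
    (h1 : 0 ≤ u.1) (h2 : u.1 < 2) (h3 : 0 ≤ u.2) (h4 : u.2 < 2) :
    ext2 (fun x : Fin 2 × Fin 2 => ρ ((x.1 : ℤ), (x.2 : ℤ))) u = ρ u := by
  rw [ext2, dif_pos ⟨h1, h2, h3, h4⟩]
  simp only
  congr 1
  rw [Prod.mk.injEq]
  constructor
  · simp [Fin.val]; omega
  · simp [Fin.val]; omega

end LRaux

theorem primitive_substitution_linearly_recurrent
    (A : Type) [Fintype A] (r : ℕ) (hr : 2 ≤ r) (τ : A → ℤ × ℤ → A)
    (hprim : ∃ n : ℕ, 1 ≤ n ∧ ∀ a b : A, ∃ u : ℤ × ℤ,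
      0 ≤ u.1 ∧ u.1 < (r : ℤ) ^ n ∧ 0 ≤ u.2 ∧ u.2 < (r : ℤ) ^ n ∧
      subIter r τ n a u = b) :
    ∃ c : ℕ, 1 ≤ c ∧ ∀ ℓ : ℕ, 1 ≤ ℓ → ∀ p q : ℤ × ℤ → A,
      globallyValid (substSubshift r τ) p ℓ →
      globallyValid (substSubshift r τ) q (c * ℓ) →
      occursIn p ℓ q (c * ℓ) := by
  classical
  obtain ⟨n0, hn0, hprim⟩ := hprim
  have hr0 : 0 < r := by omega
  set Admis : (ℤ × ℤ → A) → Prop :=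
    fun ρ => ∃ n a, occursIn ρ 2 (subIter r τ n a) (r ^ n) with hAdmis
  have hFex : ∀ g : Fin 2 × Fin 2 → A, ∃ m : ℕ, Admis (LRaux.ext2 g) →
      ∃ a, occursIn (LRaux.ext2 g) 2 (subIter r τ m a) (r ^ m) := by
    intro g
    by_cases h : Admis (LRaux.ext2 g)
    · obtain ⟨m, hm⟩ := h
      exact ⟨m, fun _ => hm⟩
    · exact ⟨0, fun hc => absurd hc h⟩
  choose F hF using hFex
  set S := Finset.univ.sup F with hS
  have hN : ∀ ρ : ℤ × ℤ → A, Admis ρ → ∀ b : A,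
      occursIn ρ 2 (subIter r τ (n0 + S) b) (r ^ (n0 + S)) := by
    intro ρ hAdm b
    set g : Fin 2 × Fin 2 → A := fun x => ρ ((x.1 : ℤ), (x.2 : ℤ)) with hg
    have hagree : ∀ u : ℤ × ℤ, 0 ≤ u.1 → u.1 < (2 : ℕ) → 0 ≤ u.2 → u.2 < (2 : ℕ) →
        ρ u = LRaux.ext2 g u := by
      intro u h1 h2 h3 h4
      exact (LRaux.ext2_restrict ρ u h1 (by exact_mod_cast h2) h3
        (by exact_mod_cast h4)).symm
    have hAdm' : Admis (LRaux.ext2 g) := by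
      obtain ⟨n, a, hocc⟩ := hAdm
      exact ⟨n, a, LRaux.occursIn_congr hagree hocc⟩
    obtain ⟨a', ha'⟩ := hF g hAdm'
    have h1 : ∀ c : A, occursIn (LRaux.ext2 g) 2 (subIter r τ (n0 + F g) c)
        (r ^ (n0 + F g)) := fun c => LRaux.occurs_pad hr0 τ n0 hprim ha' c
    have h2 := LRaux.occurs_level hr0 τ h1 (S - F g) b
    have e : S - F g + (n0 + F g) = n0 + S := by
      have : F g ≤ S := Finset.le_sup (Finset.mem_univ g)
      omega
    rw [e] at h2
    exact LRaux.occursIn_congr (fun u h1 h2 h3 h4 => (hagree u h1 h2 h3 h4).symm) h2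
  set N := n0 + S with hNdef
  refine ⟨2 * r ^ (N + 1), Nat.one_le_iff_ne_zero.mpr (by positivity), ?_⟩
  intro ℓ hℓ p q hp hq
  -- p side
  obtain ⟨x, hx, hxp⟩ := hp
  obtain ⟨n, a, hoccx⟩ := hx ℓ (0, 0)
  have hoccp : occursIn p ℓ (subIter r τ n a) (r ^ n) := by
    refine LRaux.occursIn_congr (fun u h1 h2 h3 h4 => ?_) hoccx
    rw [show u + ((0 : ℤ), (0 : ℤ)) = u from by simp]
    exact hxp u h1 h2 h3 h4
  have hkex : ∃ k : ℕ, ℓ ≤ r ^ k := ⟨ℓ, (Nat.lt_pow_self (n := ℓ) hr).le⟩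
  set k := Nat.find hkex with hkdef
  have hk : ℓ ≤ r ^ k := Nat.find_spec hkex
  have hk2 : r ^ k ≤ r * ℓ := by
    rcases Nat.eq_zero_or_pos k with h0 | hpos
    · rw [h0, pow_zero]; nlinarith
    · have hmin := Nat.find_min hkex (show k - 1 < k by omega)
      have h2 : r ^ (k - 1) < ℓ := by omega
      have e : k = (k - 1) + 1 := by omega
      rw [e, pow_succ]
      calc r ^ (k - 1) * r ≤ ℓ * r := Nat.mul_le_mul_right r (by omega)
      _ = r * ℓ := by ring
  have hpad : ∀ c' : A, occursIn p ℓ (subIter r τ (n0 + n) c') (r ^ (n0 + n)) :=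
    fun c' => LRaux.occurs_pad hr0 τ n0 hprim hoccp c'
  have hp1 := LRaux.occurs_level hr0 τ hpad (k + 1) a
  have hkZ : (ℓ : ℤ) ≤ (r : ℤ) ^ k := by exact_mod_cast hk
  obtain ⟨i₀, d, I1, I2, I3, I4, D1, D2, D3, D4, hval⟩ :=
    LRaux.extract hr τ hkZ (show k + 1 ≤ k + 1 + (n0 + n) by omega) hp1
  set ρ : ℤ × ℤ → A :=
    fun e => subIter r τ (k + 1 + (n0 + n) - k) a (e.1 + i₀.1, e.2 + i₀.2) with hρdef
  have hAdmρ : Admis ρ := by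
    refine ⟨k + 1 + (n0 + n) - k, a, i₀, I1, ?_, I3, ?_, fun e e1 e2 e3 e4 => rfl⟩
    · have : ((r ^ (k + 1 + (n0 + n) - k) : ℕ) : ℤ)
          = (r : ℤ) ^ (k + 1 + (n0 + n) - k) := by push_cast; ring
      rw [this]; push_cast; omega
    · have : ((r ^ (k + 1 + (n0 + n) - k) : ℕ) : ℤ)
          = (r : ℤ) ^ (k + 1 + (n0 + n) - k) := by push_cast; ring
      rw [this]; push_cast; omega
  have hρN := hN ρ hAdmρ
  -- q side
  obtain ⟨y, hy, hyq⟩ := hq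
  obtain ⟨n₂, a₂, hoccy⟩ := hy (2 * r ^ (N + 1) * ℓ) (0, 0)
  have hoccq : occursIn q (2 * r ^ (N + 1) * ℓ) (subIter r τ n₂ a₂) (r ^ n₂) := by
    refine LRaux.occursIn_congr (fun u h1 h2 h3 h4 => ?_) hoccy
    rw [show u + ((0 : ℤ), (0 : ℤ)) = u from by simp]
    exact hyq u h1 h2 h3 h4
  obtain ⟨v₂, V1, V2, V3, V4, hvq⟩ := hoccq
  set s := N + k with hs
  have hcs : 2 * r ^ s ≤ 2 * r ^ (N + 1) * ℓ := by
    have e1 : r ^ s = r ^ N * r ^ k := by rw [hs, pow_add]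
    have e2 : r ^ (N + 1) = r ^ N * r := by rw [pow_succ]
    rw [e1, e2]
    calc 2 * (r ^ N * r ^ k) ≤ 2 * (r ^ N * (r * ℓ)) := by
          exact Nat.mul_le_mul_left 2 (Nat.mul_le_mul_left _ hk2)
    _ = 2 * (r ^ N * r) * ℓ := by ring
  have hcℓ : (2 * r ^ s : ℕ) ≤ (r ^ n₂ : ℕ) := by
    have h1 : ((2 * r ^ (N + 1) * ℓ : ℕ) : ℤ) ≤ ((r ^ n₂ : ℕ) : ℤ) := by omega
    have h2 : (2 * r ^ (N + 1) * ℓ : ℕ) ≤ (r ^ n₂ : ℕ) := by exact_mod_cast h1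
    omega
  have hsn2 : s ≤ n₂ := by
    have h2 : r ^ s < r ^ n₂ := by
      have hpos : 0 < r ^ s := by positivity
      omega
    exact ((Nat.pow_lt_pow_iff_right hr).mp h2).le
  have hP : (0 : ℤ) < (r : ℤ) ^ s := by positivity
  set P : ℤ := (r : ℤ) ^ s with hPdef
  have hcP : ((r ^ s : ℕ) : ℤ) = P := by rw [hPdef]; push_cast; ring
  have hcn₂ : ((r ^ n₂ : ℕ) : ℤ) = (r : ℤ) ^ (n₂ - s) * P := by
    rw [hPdef]; push_cast; rw [← pow_add]; congr 1; omega
  have hcs' : 2 * P ≤ ((2 * r ^ (N + 1) * ℓ : ℕ) : ℤ) := by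
    rw [← hcP]; exact_mod_cast hcs
  have coords : ∀ vv : ℤ, 0 ≤ vv →
      vv + ((2 * r ^ (N + 1) * ℓ : ℕ) : ℤ) ≤ ((r ^ n₂ : ℕ) : ℤ) →
      ∃ j : ℤ, 0 ≤ j ∧ vv ≤ j * P ∧
        j * P + P ≤ vv + ((2 * r ^ (N + 1) * ℓ : ℕ) : ℤ) ∧
        j + 1 ≤ (r : ℤ) ^ (n₂ - s) := by
    intro vv hv0 hvb
    have e2 : (vv + P - 1) % P = (vv + P - 1) - P * ((vv + P - 1) / P) :=
      Int.emod_def _ _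
    have e3 : (vv + P - 1) % P < P := Int.emod_lt_of_pos _ hP
    have e4 : 0 ≤ (vv + P - 1) % P := Int.emod_nonneg _ hP.ne'
    have e5 : (vv + P - 1) / P * P ≤ vv + P - 1 := Int.ediv_mul_le _ hP.ne'
    have e6 : (vv + P - 1) / P * P = (vv + P - 1) - (vv + P - 1) % P := by
      rw [e2]; ring
    refine ⟨(vv + P - 1) / P, Int.ediv_nonneg (by omega) hP.le, by linarith, by linarith, ?_⟩
    have hub : ((vv + P - 1) / P + 1) * P ≤ (r : ℤ) ^ (n₂ - s) * P := by
      rw [hcn₂] at hvb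
      nlinarith
    exact le_of_mul_le_mul_right hub hP
  obtain ⟨j₁, j10, j11, j12, j13⟩ := coords v₂.1 V1 V2
  obtain ⟨j₂, j20, j21, j22, j23⟩ := coords v₂.2 V3 V4
  set b := subIter r τ (n₂ - s) a₂ (j₁, j₂) with hbdef
  have hblockq : occursIn (subIter r τ s b) (r ^ s) q (2 * r ^ (N + 1) * ℓ) := by
    refine ⟨(j₁ * P - v₂.1, j₂ * P - v₂.2), by simp only; omega, ?_,
      by simp only; omega, ?_, ?_⟩
    · simp only; rw [hcP]; linarith
    · simp only; rw [hcP]; linarith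
    · intro u hu1 hu2 hu3 hu4
      rw [hcP] at hu2 hu4
      simp only
      have harg := hvq (u.1 + (j₁ * P - v₂.1), u.2 + (j₂ * P - v₂.2))
        (by simp only; omega) (by simp only; linarith) (by simp only; omega)
        (by simp only; linarith)
      have e : ((u.1 + (j₁ * P - v₂.1)) + v₂.1, (u.2 + (j₂ * P - v₂.2)) + v₂.2)
          = (u.1 + j₁ * P, u.2 + j₂ * P) := by
        rw [Prod.mk.injEq]; constructor <;> ring
      rw [e] at harg
      have hbv := LRaux.block_value hr0 τ (n₂ - s) s a₂ (j₁, j₂) u hu1 hu2 hu3 hu4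
      rw [show n₂ - s + s = n₂ from by omega] at hbv
      rw [← harg]
      exact hbv
  have hps : occursIn p ℓ (subIter r τ (N + k) b) (r ^ (N + k)) :=
    LRaux.embed hr τ hkZ D1 D2 D3 D4 hval (hρN b)
  exact LRaux.occursIn_trans hps hblockq
end

section
/- Let X be a ℤ² subshift and suppose X is linearly recurrent with constant c (every globally valid ℓ×ℓ pattern occurs in every globally valid cℓ×cℓ pattern). Then X is weakly linearly block transitive: there exists K such that for all n, all globally valid n×n patterns p, q, and all v ∈ ℤ² with ‖v‖_∞ ≥ K·n, there exists w ∈ ℤ² with ‖w − v‖_∞ ≤ K·n such that some configuration x ∈ X contains p at position (0,0) and q at position w. -/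
section

variable {A : Type*}

/-- The configuration `x` contains the `ℓ × ℓ` pattern `p` at position `w`. -/
def containsAt (x : ℤ × ℤ → A) (p : ℤ × ℤ → A) (ℓ : ℕ) (w : ℤ × ℤ) : Prop :=
  ∀ u : ℤ × ℤ, 0 ≤ u.1 → u.1 < ℓ → 0 ≤ u.2 → u.2 < ℓ → x (u + w) = p u

end

theorem linearly_recurrent_implies_weakly_linearly_block_transitive
    (A : Type) [Fintype A] (X : Set ((ℤ × ℤ) → A)) (hne : X.Nonempty)
    (hinv : ∀ v : ℤ × ℤ, ∀ x ∈ X, (fun u => x (u + v)) ∈ X)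
    (c : ℕ) (hc : 1 ≤ c)
    (hrec : ∀ ℓ : ℕ, 1 ≤ ℓ → ∀ p q : ℤ × ℤ → A,
      globallyValid X p ℓ → globallyValid X q (c * ℓ) → occursIn p ℓ q (c * ℓ)) :
    ∃ K : ℕ, 1 ≤ K ∧ ∀ n : ℕ, 1 ≤ n → ∀ p q : ℤ × ℤ → A,
      globallyValid X p n → globallyValid X q n →
      ∀ v : ℤ × ℤ, (K : ℤ) * n ≤ max |v.1| |v.2| →
        ∃ w : ℤ × ℤ, max |w.1 - v.1| |w.2 - v.2| ≤ (K : ℤ) * n ∧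
          ∃ x ∈ X, containsAt x p n (0, 0) ∧ containsAt x q n w := by
  refine ⟨c, hc, fun n hn p q hp hq v _ => ?_⟩
  obtain ⟨x, hx, hxp⟩ := hp
  have hy : (fun u => x (u + v)) ∈ X := hinv v x hx
  have hbig : globallyValid X (fun u => x (u + v)) (c * n) :=
    ⟨_, hy, fun u _ _ _ _ => rfl⟩
  obtain ⟨s, hs1, hs2, hs3, hs4, hocc⟩ := hrec n hn q _ hq hbig
  have hcn : ((c * n : ℕ) : ℤ) = (c : ℤ) * n := by push_cast; ring
  refine ⟨(s.1 + v.1, s.2 + v.2), ?_, x, hx, ?_, ?_⟩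
  · simp only [max_le_iff]
    constructor <;> rw [abs_le] <;> omega
  · intro u h1 h2 h3 h4
    convert hxp u h1 h2 h3 h4 using 2
    ext <;> simp
  · intro u h1 h2 h3 h4
    have h := hocc u h1 h2 h3 h4
    simp only at h
    rw [← h]
    congr 1
    ext <;> simp <;> ring
end

section
/- Suppose X is a ℤ² subshift whose block gluing function B satisfies B(n) < ∞ for all n, and X contains at least two distinct globally valid 1×1 patterns (i.e. at least two symbols occur in X). Then the topological entropy of X in the case B(n) = O(1) is strictly positive: if B(n) ≤ C for all n, then h(X) ≥ log 2 / (1 + C)². -/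
open Filter

section

variable {A : Type*}

/-- Number of globally valid `k × k` patterns of `X`. -/
noncomputable def patternCount (X : Set ((ℤ × ℤ) → A)) (k : ℕ) : ℕ :=
  Nat.card {p : Fin k × Fin k → A //
    ∃ x ∈ X, ∀ ij : Fin k × Fin k, x ((ij.1 : ℤ), (ij.2 : ℤ)) = p ij}

end
set_option maxHeartbeats 1000000 in
theorem constant_block_gluing_positive_entropy
    (A : Type) [Fintype A] (X : Set ((ℤ × ℤ) → A)) (hne : X.Nonempty)
    (hinv : ∀ v : ℤ × ℤ, ∀ x ∈ X, (fun u => x (u + v)) ∈ X)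
    (hsymb : ∃ a b : A, a ≠ b ∧ (∃ x ∈ X, x (0, 0) = a) ∧ (∃ x ∈ X, x (0, 0) = b))
    (C : ℕ)
    (hglue : ∀ n : ℕ, 1 ≤ n → ∀ p q : ℤ × ℤ → A,
      globallyValid X p n → globallyValid X q n →
      ∀ v : ℤ × ℤ, ((n : ℤ) + C ≤ |v.1| ∨ (n : ℤ) + C ≤ |v.2|) →
        ∃ x ∈ X, containsAt x p n (0, 0) ∧ containsAt x q n v)
    (h : ℝ)
    (hent : Tendsto (fun k : ℕ => Real.logb 2 (patternCount X k) / (k : ℝ) ^ 2)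
      atTop (nhds h)) :
    Real.logb 2 2 / ((1 : ℝ) + C) ^ 2 ≤ h := by
  obtain ⟨a, b, hab, ⟨xa, hxa, hxa0⟩, ⟨xb, hxb, hxb0⟩⟩ := hsymb
  -- arithmetic helper
  have mulLt : ∀ z w : ℤ, z < w → (1 + (C : ℤ)) * z < (1 + (C : ℤ)) * w - C := by
    intro z w hzw
    have h1 : (1 + (C : ℤ)) * z ≤ (1 + (C : ℤ)) * (w - 1) :=
      mul_le_mul_of_nonneg_left (by omega) (by positivity)
    have h2 : (1 + (C : ℤ)) * (w - 1) = (1 + (C : ℤ)) * w - (1 + (C : ℤ)) := by ring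
    linarith
  -- glue two configurations
  have glue2 : ∀ n : ℕ, 1 ≤ n → ∀ x1, x1 ∈ X → ∀ x2, x2 ∈ X → ∀ v : ℤ × ℤ,
      ((n : ℤ) + C ≤ |v.1| ∨ (n : ℤ) + C ≤ |v.2|) →
      ∃ x ∈ X, ∀ u : ℤ × ℤ, 0 ≤ u.1 → u.1 < n → 0 ≤ u.2 → u.2 < n →
        x u = x1 u ∧ x (u + v) = x2 u := by
    intro n hn x1 h1 x2 h2 v hv
    obtain ⟨x, hx, hp, hq⟩ := hglue n hn x1 x2 ⟨x1, h1, fun u _ _ _ _ => rfl⟩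
      ⟨x2, h2, fun u _ _ _ _ => rfl⟩ v hv
    refine ⟨x, hx, fun u a1 a2 a3 a4 => ⟨?_, hq u a1 a2 a3 a4⟩⟩
    have := hp u a1 a2 a3 a4
    have e0 : u + ((0 : ℤ), (0 : ℤ)) = u := by ext <;> simp
    rw [e0] at this
    exact this
  -- main induction: any 2^t × 2^t grid of symbols a/b can be realized
  have key : ∀ t : ℕ, ∀ f : ℤ × ℤ → Bool, ∃ x ∈ X,
      ∀ i j : ℤ, 0 ≤ i → i < 2 ^ t → 0 ≤ j → j < 2 ^ t →
        x ((1 + (C : ℤ)) * i, (1 + (C : ℤ)) * j) = (if f (i, j) then a else b) := by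
    intro t
    induction t with
    | zero =>
      intro f
      cases hf : f (0, 0) with
      | false =>
        refine ⟨xb, hxb, fun i j h1 h2 h3 h4 => ?_⟩
        have hi : i = 0 := by omega
        have hj : j = 0 := by omega
        subst hi; subst hj
        rw [hf]
        simpa using hxb0
      | true =>
        refine ⟨xa, hxa, fun i j h1 h2 h3 h4 => ?_⟩
        have hi : i = 0 := by omega
        have hj : j = 0 := by omega
        subst hi; subst hj
        rw [hf]
        simpa using hxa0
    | succ t ih =>
      have hm1 : 1 ≤ 2 ^ t := Nat.one_le_two_pow
      set m : ℕ := 2 ^ t with hm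
      have hmZ : ((m : ℤ)) = 2 ^ t := by simp [hm]
      set n : ℕ := (1 + C) * m - C with hn
      set N : ℕ := (1 + C) * (2 * m) - C with hN
      have hCm : 1 + C ≤ (1 + C) * m := Nat.le_mul_of_pos_right (1 + C) (by omega)
      have hC2m : 1 + C ≤ (1 + C) * (2 * m) := Nat.le_mul_of_pos_right (1 + C) (by omega)
      have hnZ : (n : ℤ) = (1 + (C : ℤ)) * m - C := by
        rw [hn]; push_cast [show C ≤ (1 + C) * m by omega]; ring
      have hNZ : (N : ℤ) = (1 + (C : ℤ)) * (2 * m) - C := by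
        rw [hN]; push_cast [show C ≤ (1 + C) * (2 * m) by omega]; ring
      have hn1 : 1 ≤ n := by omega
      have hN1 : 1 ≤ N := by omega
      have hnN : (n : ℤ) ≤ N := by
        have : (1 + C) * m ≤ (1 + C) * (2 * m) := Nat.mul_le_mul_left _ (by omega)
        omega
      -- horizontal: 2m × m grids
      have hor : ∀ f : ℤ × ℤ → Bool, ∃ x ∈ X, ∀ i j : ℤ,
          0 ≤ i → i < 2 * (m : ℤ) → 0 ≤ j → j < (m : ℤ) →
          x ((1 + (C : ℤ)) * i, (1 + (C : ℤ)) * j) = (if f (i, j) then a else b) := by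
        intro f
        obtain ⟨x1, hx1, hx1p⟩ := ih f
        obtain ⟨x2, hx2, hx2p⟩ := ih (fun p => f (p.1 + m, p.2))
        obtain ⟨x, hx, hxp⟩ := glue2 n hn1 x1 hx1 x2 hx2 ((1 + (C : ℤ)) * m, 0)
          (Or.inl (by
            rw [hnZ, abs_of_nonneg (by positivity)]
            simp))
        refine ⟨x, hx, fun i j h1 h2 h3 h4 => ?_⟩
        have hb3 : (0 : ℤ) ≤ (1 + (C : ℤ)) * j := by positivity
        have hb4 : (1 + (C : ℤ)) * j < n := by rw [hnZ]; exact mulLt j m h4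
        by_cases hi : i < (m : ℤ)
        · have hb1 : (0 : ℤ) ≤ (1 + (C : ℤ)) * i := by positivity
          have hb2 : (1 + (C : ℤ)) * i < n := by rw [hnZ]; exact mulLt i m hi
          have e := (hxp ((1 + (C : ℤ)) * i, (1 + (C : ℤ)) * j) hb1 hb2 hb3 hb4).1
          rw [e]
          exact hx1p i j h1 (by rw [← hmZ]; omega) h3 (by rw [← hmZ]; omega)
        · push_neg at hi
          have hb1 : (0 : ℤ) ≤ (1 + (C : ℤ)) * (i - m) :=
            mul_nonneg (by positivity) (by omega)
          have hb2 : (1 + (C : ℤ)) * (i - m) < n := by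
            rw [hnZ]; exact mulLt (i - m) m (by omega)
          have e := (hxp ((1 + (C : ℤ)) * (i - m), (1 + (C : ℤ)) * j) hb1 hb2 hb3 hb4).2
          have ept : ((1 + (C : ℤ)) * (i - m), (1 + (C : ℤ)) * j)
              + ((1 + (C : ℤ)) * m, (0 : ℤ)) = ((1 + (C : ℤ)) * i, (1 + (C : ℤ)) * j) := by
            rw [Prod.mk_add_mk, Prod.mk.injEq]
            constructor <;> ring
          rw [ept] at e
          rw [e]
          have := hx2p (i - m) j (by omega) (by rw [← hmZ]; omega) h3
            (by rw [← hmZ]; omega)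
          simpa using this
      -- vertical: 2m × 2m grids
      intro f
      obtain ⟨x1, hx1, hx1p⟩ := hor (fun p => f (p.1, p.2 + m))
      obtain ⟨y, hy, hyp⟩ := hor f
      have hx2 : (fun u : ℤ × ℤ => y (u + ((0 : ℤ), (n : ℤ) - N))) ∈ X := hinv _ y hy
      obtain ⟨x, hx, hxp⟩ := glue2 N hN1 x1 hx1 _ hx2 ((0 : ℤ), -((N : ℤ) + C))
        (Or.inr (by rw [abs_neg, abs_of_nonneg (by positivity)]))
      refine ⟨fun u => x (u + ((0 : ℤ), -((1 + (C : ℤ)) * m))), hinv _ x hx, ?_⟩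
      intro i j h1 h2 h3 h4
      have hpow : (2 : ℤ) ^ (t + 1) = 2 * (m : ℤ) := by rw [hmZ]; ring
      have h2' : i < 2 * (m : ℤ) := by omega
      have h4' : j < 2 * (m : ℤ) := by omega
      show x (((1 + (C : ℤ)) * i, (1 + (C : ℤ)) * j) + ((0 : ℤ), -((1 + (C : ℤ)) * m)))
          = (if f (i, j) then a else b)
      by_cases hj : (m : ℤ) ≤ j
      · -- comes from x1 (top half placed at origin)
        have hb1 : (0 : ℤ) ≤ (1 + (C : ℤ)) * i := by positivity
        have hb2 : (1 + (C : ℤ)) * i < N := by rw [hNZ]; exact mulLt i (2 * m) h2'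
        have hb3 : (0 : ℤ) ≤ (1 + (C : ℤ)) * (j - m) :=
          mul_nonneg (by positivity) (by omega)
        have hb4 : (1 + (C : ℤ)) * (j - m) < N := by
          rw [hNZ]; exact mulLt (j - m) (2 * m) (by omega)
        have e := (hxp ((1 + (C : ℤ)) * i, (1 + (C : ℤ)) * (j - m)) hb1 hb2 hb3 hb4).1
        have ept : (((1 + (C : ℤ)) * i, (1 + (C : ℤ)) * j)
            + ((0 : ℤ), -((1 + (C : ℤ)) * m)) : ℤ × ℤ)
            = ((1 + (C : ℤ)) * i, (1 + (C : ℤ)) * (j - m)) := by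
          rw [Prod.mk_add_mk, Prod.mk.injEq]
          constructor <;> ring
        rw [ept, e]
        have := hx1p i (j - m) h1 h2' (by omega) (by omega)
        rw [this]
        have earg : ((j : ℤ) - m) + m = j := by ring
        rw [earg]
      · -- comes from x2 (bottom half glued below)
        push_neg at hj
        have hb1 : (0 : ℤ) ≤ (1 + (C : ℤ)) * i := by positivity
        have hb2 : (1 + (C : ℤ)) * i < N := by rw [hNZ]; exact mulLt i (2 * m) h2'
        have hjn : (1 + (C : ℤ)) * j < n := by rw [hnZ]; exact mulLt j m hj
        have hj0 : (0 : ℤ) ≤ (1 + (C : ℤ)) * j := by positivity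
        have hb3 : (0 : ℤ) ≤ ((N : ℤ) - n) + (1 + (C : ℤ)) * j := by linarith
        have hb4 : ((N : ℤ) - n) + (1 + (C : ℤ)) * j < N := by linarith
        have e := (hxp ((1 + (C : ℤ)) * i, ((N : ℤ) - n) + (1 + (C : ℤ)) * j)
          hb1 hb2 hb3 hb4).2
        have ept : (((1 + (C : ℤ)) * i, ((N : ℤ) - n) + (1 + (C : ℤ)) * j)
            + ((0 : ℤ), -((N : ℤ) + C)) : ℤ × ℤ)
            = (((1 + (C : ℤ)) * i, (1 + (C : ℤ)) * j)
              + ((0 : ℤ), -((1 + (C : ℤ)) * m))) := by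
          rw [Prod.mk_add_mk, Prod.mk_add_mk, Prod.mk.injEq]
          refine ⟨by ring, ?_⟩
          rw [hnZ]; ring
        rw [ept] at e
        rw [e]
        show y ((((1 + (C : ℤ)) * i, ((N : ℤ) - n) + (1 + (C : ℤ)) * j) : ℤ × ℤ)
            + ((0 : ℤ), (n : ℤ) - N)) = _
        have ept2 : ((((1 + (C : ℤ)) * i, ((N : ℤ) - n) + (1 + (C : ℤ)) * j) : ℤ × ℤ)
            + ((0 : ℤ), (n : ℤ) - N)) = ((1 + (C : ℤ)) * i, (1 + (C : ℤ)) * j) := by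
          rw [Prod.mk_add_mk, Prod.mk.injEq]
          constructor <;> ring
        rw [ept2]
        exact hyp i j h1 h2' h3 hj
  -- counting: at least 2^(m²) valid (1+C)·m patterns, m = 2^t
  have count : ∀ t : ℕ, 2 ^ (2 ^ t * 2 ^ t) ≤ patternCount X ((1 + C) * 2 ^ t) := by
    intro t
    have hm1 : 1 ≤ 2 ^ t := Nat.one_le_two_pow
    set m : ℕ := 2 ^ t with hm
    have hmZ : ((m : ℤ)) = 2 ^ t := by simp [hm]
    set k : ℕ := (1 + C) * m with hk
    have choice : ∀ g : Fin m × Fin m → Bool, ∃ x ∈ X, ∀ i j : Fin m,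
        x ((1 + (C : ℤ)) * (i : ℤ), (1 + (C : ℤ)) * (j : ℤ))
          = (if g (i, j) then a else b) := by
      intro g
      obtain ⟨x, hx, hxp⟩ := key t (fun p =>
        if hc : 0 ≤ p.1 ∧ p.1 < (m : ℤ) ∧ 0 ≤ p.2 ∧ p.2 < (m : ℤ)
        then g (⟨p.1.toNat, by omega⟩, ⟨p.2.toNat, by omega⟩) else false)
      refine ⟨x, hx, fun i j => ?_⟩
      have hi : (i : ℤ) < 2 ^ t := by rw [← hmZ]; exact_mod_cast i.2
      have hj : (j : ℤ) < 2 ^ t := by rw [← hmZ]; exact_mod_cast j.2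
      have := hxp i j (by positivity) hi (by positivity) hj
      rw [this]
      have hc : 0 ≤ ((i : ℤ)) ∧ ((i : ℤ)) < (m : ℤ) ∧ 0 ≤ ((j : ℤ)) ∧ ((j : ℤ)) < (m : ℤ) :=
        ⟨by positivity, by rw [← hmZ] at hi; omega, by positivity, by rw [← hmZ] at hj; omega⟩
      rw [dif_pos hc]
      simp only [Int.toNat_natCast, Fin.eta]
    choose xg hxgX hxgval using choice
    have hik : ∀ i : Fin m, (1 + C) * (i : ℕ) < k := by
      intro i
      rw [hk]
      exact mul_lt_mul_of_pos_left i.2 (by omega)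
    let F : (Fin m × Fin m → Bool) →
        {p : Fin k × Fin k → A //
          ∃ x ∈ X, ∀ ij : Fin k × Fin k, x ((ij.1 : ℤ), (ij.2 : ℤ)) = p ij} :=
      fun g => ⟨fun ij => xg g ((ij.1 : ℤ), (ij.2 : ℤ)), xg g, hxgX g, fun ij => rfl⟩
    have hFinj : Function.Injective F := by
      intro g1 g2 hF
      funext p
      obtain ⟨i, j⟩ := p
      have hF' := congrFun (congrArg Subtype.val hF)
        (⟨(1 + C) * (i : ℕ), hik i⟩, ⟨(1 + C) * (j : ℕ), hik j⟩)
      simp only [F] at hF'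
      have hcast : ∀ l : Fin m, (((1 + C) * (l : ℕ) : ℕ) : ℤ) = (1 + (C : ℤ)) * (l : ℤ) := by
        intro l; push_cast; ring
      rw [hcast i, hcast j] at hF'
      rw [hxgval g1 i j, hxgval g2 i j] at hF'
      cases h1 : g1 (i, j) <;> cases h2 : g2 (i, j) <;> simp_all
    calc 2 ^ (m * m) = Nat.card (Fin m × Fin m → Bool) := by
          simp [Nat.card_eq_fintype_card]
      _ ≤ patternCount X k := Nat.card_le_card_of_injective F hFinj
  -- analysis
  have hC1 : (0 : ℝ) < 1 + (C : ℝ) := by positivity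
  have sm : StrictMono (fun t : ℕ => (1 + C) * 2 ^ t) := by
    intro s t hst
    have := Nat.pow_lt_pow_right (a := 2) one_lt_two hst
    exact mul_lt_mul_of_pos_left this (by omega)
  have htend : Tendsto (fun t : ℕ =>
      Real.logb 2 (patternCount X ((1 + C) * 2 ^ t)) / (((1 + C) * 2 ^ t : ℕ) : ℝ) ^ 2)
      atTop (nhds h) := hent.comp sm.tendsto_atTop
  have hbound : ∀ t : ℕ, Real.logb 2 2 / ((1 : ℝ) + C) ^ 2 ≤
      Real.logb 2 (patternCount X ((1 + C) * 2 ^ t)) / (((1 + C) * 2 ^ t : ℕ) : ℝ) ^ 2 := by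
    intro t
    have hP := count t
    have hmm : ((2 ^ t * 2 ^ t : ℕ) : ℝ) = (2 : ℝ) ^ t * 2 ^ t := by push_cast; ring
    have hlog : (2 : ℝ) ^ t * 2 ^ t ≤
        Real.logb 2 (patternCount X ((1 + C) * 2 ^ t)) := by
      have h1 : ((2 : ℝ)) ^ (2 ^ t * 2 ^ t) ≤ (patternCount X ((1 + C) * 2 ^ t) : ℝ) := by
        exact_mod_cast hP
      calc (2 : ℝ) ^ t * 2 ^ t = Real.logb 2 ((2 : ℝ) ^ (2 ^ t * 2 ^ t)) := by
            rw [Real.logb_pow, Real.logb_self_eq_one (by norm_num)]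
            push_cast; ring
        _ ≤ _ := Real.logb_le_logb_of_le (by norm_num) (by positivity) h1
    have hkR : (((1 + C) * 2 ^ t : ℕ) : ℝ) = (1 + (C : ℝ)) * 2 ^ t := by push_cast; ring
    rw [Real.logb_self_eq_one (by norm_num), div_le_div_iff₀ (by positivity)
      (by rw [hkR]; positivity), hkR]
    calc 1 * ((1 + (C : ℝ)) * 2 ^ t) ^ 2 = ((1 : ℝ) + C) ^ 2 * ((2 : ℝ) ^ t * 2 ^ t) := by
          ring
      _ ≤ ((1 : ℝ) + C) ^ 2 * Real.logb 2 (patternCount X ((1 + C) * 2 ^ t)) :=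
          mul_le_mul_of_nonneg_left hlog (by positivity)
      _ = Real.logb 2 (patternCount X ((1 + C) * 2 ^ t)) * ((1 : ℝ) + C) ^ 2 := by ring
  exact ge_of_tendsto' htend hbound
end

section
/- Let y, z : ℤ → {0,1}. For every b ∈ ℤ and a ∈ ℤ, the point g_{y,z}(a,b) + (1,0) is in the image of g_{y,z} if and only if y_a = 0 or z_b = 0; specifically, if y_a = 0 then g_{y,z}(a,b)+(1,0) = g_{y,z}(a+1,b), and if y_a = 1 and z_b = 0 then g_{y,z}(a,b)+(1,0) = g_{y,z}(a+1,b+1). -/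
lemma sgnSum_diff (f : ℤ → ℤ) (hf : ∀ k, f k = 0 ∨ f k = 1) (m n : ℤ) (h : m ≤ n) :
    0 ≤ sgnSum f n - sgnSum f m ∧ sgnSum f n - sgnSum f m ≤ n - m := by
  refine Int.le_induction (motive := fun n _ => 0 ≤ sgnSum f n - sgnSum f m ∧ sgnSum f n - sgnSum f m ≤ n - m) ?_ ?_ n h
  · omega
  · intro n hmn ih
    rw [sgnSum_succ]
    rcases hf n with h1 | h1 <;> omega

theorem gfun_east_neighbor (y z : ℤ → ℤ)
    (hy : ∀ k, y k = 0 ∨ y k = 1) (hz : ∀ k, z k = 0 ∨ z k = 1)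
    (a b : ℤ) :
    (gfun y z (a, b) + (1, 0) ∈ Set.range (gfun y z) ↔ (y a = 0 ∨ z b = 0)) ∧
    (y a = 0 → gfun y z (a + 1, b) = gfun y z (a, b) + (1, 0)) ∧
    (y a = 1 → z b = 0 → gfun y z (a + 1, b + 1) = gfun y z (a, b) + (1, 0)) := by
  have hstep_y : sgnSum y (a + 1) = sgnSum y a + y a := sgnSum_succ y a
  have hstep_z : sgnSum z (b + 1) = sgnSum z b + z b := sgnSum_succ z b
  have h2 : y a = 0 → gfun y z (a + 1, b) = gfun y z (a, b) + (1, 0) := by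
    intro h
    simp only [gfun, Prod.mk_add_mk, Prod.mk.injEq, hstep_y, h]
    constructor <;> ring
  have h3 : y a = 1 → z b = 0 → gfun y z (a + 1, b + 1) = gfun y z (a, b) + (1, 0) := by
    intro h1 h2
    simp only [gfun, Prod.mk_add_mk, Prod.mk.injEq, hstep_y, hstep_z, h1, h2]
    constructor <;> ring
  refine ⟨⟨?_, ?_⟩, h2, h3⟩
  · rintro ⟨⟨c, d⟩, hcd⟩
    simp only [gfun, Prod.mk_add_mk, Prod.mk.injEq] at hcd
    obtain ⟨e1, e2⟩ := hcd
    by_contra hcon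
    push_neg at hcon
    obtain ⟨hy1, hz1⟩ := hcon
    have hya : y a = 1 := (hy a).resolve_left hy1
    have hzb : z b = 1 := (hz b).resolve_left hz1
    rcases le_or_gt c a with hca | hca
    · have Hy := sgnSum_diff y hy c a hca
      have hdb : d ≤ b := by omega
      have Hz := sgnSum_diff z hz d b hdb
      omega
    · have Hy := sgnSum_diff y hy a c (by omega)
      have hbd : b ≤ d := by omega
      have Hz := sgnSum_diff z hz b d hbd
      have hc : c = a + 1 := by omega
      have hd : d = b ∨ d = b + 1 := by omega
      rcases hd with hd | hd
      · subst hc hd; omega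
      · subst hc hd; omega
  · rintro (h | h)
    · exact ⟨(a + 1, b), h2 h⟩
    · rcases hy a with h1 | h1
      · exact ⟨(a + 1, b), h2 h1⟩
      · exact ⟨(a + 1, b + 1), h3 h1 h⟩
end
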